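/- Let h be a continuous complex-valued function on ℝ^n of polynomial growth, meaning |h(x)| ≤ C(1 + |x|^m) for some C ≥ 0, some nonnegative integer m, and all x ∈ ℝ^n, and suppose h is harmonic in the sense of tempered distributions: ∫_{ℝ^n} h(x) Δφ(x) dx = 0 for all φ ∈ 𝒮(ℝ^n), where Δ = Σ_{j=1}^n ∂²/∂x_j². Let λ be the tempered distribution λ(φ) = ∫_{ℝ^n} φ(x) h(x) dx, and let λ̂ be its Fourier transform, defined by λ̂(φ) = λ(φ̂). Then λ̂ is supported at the origin, i.e., λ̂(φ) = 0 for every φ ∈ 𝒮(ℝ^n) vanishing on an open neighborhood of 0. -/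

import Mathlib

open MeasureTheory

/-- The partial derivative of `f` in the `i`-th coordinate direction. -/
noncomputable def pderivI (n : ℕ) (i : Fin n)
    (f : EuclideanSpace ℝ (Fin n) → ℂ) : EuclideanSpace ℝ (Fin n) → ℂ :=
  fun x => fderiv ℝ f x (EuclideanSpace.single i 1)

section Aux

open Real Complex SchwartzMap Metric
open scoped ContDiff

variable {E₁ : Type*} [NormedAddCommGroup E₁] [NormedSpace ℝ E₁]
variable {F₁ : Type*} [NormedAddCommGroup F₁] [NormedSpace ℝ F₁]
variable {G₁ : Type*} [NormedAddCommGroup G₁] [NormedSpace ℝ G₁]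
variable {H₁ : Type*} [NormedAddCommGroup H₁] [NormedSpace ℝ H₁]

lemma temperate_bilin (B : F₁ →L[ℝ] G₁ →L[ℝ] H₁) {f : E₁ → F₁} {g : E₁ → G₁}
    (hf : Function.HasTemperateGrowth f) (hg : Function.HasTemperateGrowth g) :
    Function.HasTemperateGrowth (fun x => B (f x) (g x)) := by
  refine ⟨(B.isBoundedBilinearMap.contDiff.restrict_scalars ℝ).comp (hf.1.prodMk hg.1), fun N => ?_⟩
  obtain ⟨k1, C1, hC1, h1⟩ := hf.norm_iteratedFDeriv_le_uniform N
  obtain ⟨k2, C2, hC2, h2⟩ := hg.norm_iteratedFDeriv_le_uniform N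
  refine ⟨k1 + k2, ‖B‖ * (∑ i ∈ Finset.range (N+1), (N.choose i : ℝ)) * (C1 * C2), fun x => ?_⟩
  have hb := B.norm_iteratedFDeriv_le_of_bilinear hf.1 hg.1 x (n := N) (mod_cast le_top)
  have hsum : ∑ i ∈ Finset.range (N+1),
        (N.choose i : ℝ) * ‖iteratedFDeriv ℝ i f x‖ * ‖iteratedFDeriv ℝ (N-i) g x‖
      ≤ ∑ i ∈ Finset.range (N+1), (N.choose i : ℝ) * ((C1 * C2) * (1+‖x‖)^(k1+k2)) := by
    refine Finset.sum_le_sum fun i hi => ?_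
    rw [Finset.mem_range] at hi
    have hle1 := h1 i (by omega) x
    have hle2 := h2 (N - i) (by omega) x
    calc (N.choose i : ℝ) * ‖iteratedFDeriv ℝ i f x‖ * ‖iteratedFDeriv ℝ (N-i) g x‖
        ≤ (N.choose i : ℝ) * (C1 * (1+‖x‖)^k1) * (C2 * (1+‖x‖)^k2) := by
          refine mul_le_mul (mul_le_mul_of_nonneg_left hle1 (by positivity)) hle2
            (norm_nonneg _) (by positivity)
      _ = (N.choose i : ℝ) * ((C1 * C2) * (1+‖x‖)^(k1+k2)) := by rw [pow_add]; ring
  calc ‖iteratedFDeriv ℝ N (fun x => B (f x) (g x)) x‖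
      ≤ ‖B‖ * ∑ i ∈ Finset.range (N+1),
          (N.choose i : ℝ) * ‖iteratedFDeriv ℝ i f x‖ * ‖iteratedFDeriv ℝ (N-i) g x‖ := hb
    _ ≤ ‖B‖ * ∑ i ∈ Finset.range (N+1),
          (N.choose i : ℝ) * ((C1 * C2) * (1+‖x‖)^(k1+k2)) :=
        mul_le_mul_of_nonneg_left hsum (norm_nonneg B)
    _ = ‖B‖ * (∑ i ∈ Finset.range (N+1), (N.choose i : ℝ)) * (C1 * C2) * (1+‖x‖)^(k1+k2) := by
        rw [← Finset.sum_mul]; ring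

lemma temperate_add {f g : E₁ → F₁}
    (hf : Function.HasTemperateGrowth f) (hg : Function.HasTemperateGrowth g) :
    Function.HasTemperateGrowth (fun x => f x + g x) := by
  refine ⟨hf.1.add hg.1, fun N => ?_⟩
  obtain ⟨k1, C1, hC1, h1⟩ := hf.norm_iteratedFDeriv_le_uniform N
  obtain ⟨k2, C2, hC2, h2⟩ := hg.norm_iteratedFDeriv_le_uniform N
  refine ⟨k1 + k2, C1 + C2, fun x => ?_⟩
  have : iteratedFDeriv ℝ N (fun x => f x + g x) x
      = iteratedFDeriv ℝ N f x + iteratedFDeriv ℝ N g x :=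
    iteratedFDeriv_add_apply (hf.1.of_le (m := (N : WithTop ℕ∞)) (by exact_mod_cast le_top)).contDiffAt
      (hg.1.of_le (m := (N : WithTop ℕ∞)) (by exact_mod_cast le_top)).contDiffAt
  rw [this]
  have hx1 : (1:ℝ) ≤ (1+‖x‖) := by linarith [norm_nonneg x]
  calc ‖iteratedFDeriv ℝ N f x + iteratedFDeriv ℝ N g x‖
      ≤ ‖iteratedFDeriv ℝ N f x‖ + ‖iteratedFDeriv ℝ N g x‖ := norm_add_le _ _
    _ ≤ C1 * (1+‖x‖)^k1 + C2 * (1+‖x‖)^k2 := add_le_add (h1 N le_rfl x) (h2 N le_rfl x)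
    _ ≤ C1 * (1+‖x‖)^(k1+k2) + C2 * (1+‖x‖)^(k1+k2) := by
        refine add_le_add (mul_le_mul_of_nonneg_left (pow_le_pow_right₀ hx1 (by omega)) hC1)
          (mul_le_mul_of_nonneg_left (pow_le_pow_right₀ hx1 (by omega)) hC2)
    _ = (C1 + C2) * (1+‖x‖)^(k1+k2) := by ring

lemma temperate_of_compact_support {f : E₁ → F₁} (hf : ContDiff ℝ ∞ f)
    (hsupp : HasCompactSupport f) : Function.HasTemperateGrowth f := by
  refine ⟨hf, fun N => ?_⟩
  obtain ⟨C, hC⟩ := (hf.continuous_iteratedFDeriv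
    (mod_cast le_top)).bounded_above_of_compact_support (hsupp.iteratedFDeriv N)
  exact ⟨0, C, fun x => by simpa using hC x⟩

lemma temperate_ofReal {f : E₁ → ℝ} (hf : Function.HasTemperateGrowth f) :
    Function.HasTemperateGrowth (fun x => ((f x : ℝ) : ℂ)) := by
  refine ⟨Complex.ofRealCLM.contDiff.comp hf.1, fun N => ?_⟩
  obtain ⟨k, C, hC, h⟩ := hf.norm_iteratedFDeriv_le_uniform N
  refine ⟨k, C, fun x => ?_⟩
  have heq : (fun x => ((f x : ℝ) : ℂ)) = ⇑Complex.ofRealLI ∘ f := rfl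
  rw [heq, Complex.ofRealLI.norm_iteratedFDeriv_comp_left (hf.1.contDiffAt (x := x)) (mod_cast le_top)]
  exact h N le_rfl x

lemma inv_deriv_bound {ε : ℝ} (hε : 0 < ε) (N i : ℕ) (hi : i ≤ N) {y : ℝ} (hy : y ∈ Set.Ioi ε) :
    ‖iteratedFDerivWithin ℝ i (Inv.inv : ℝ → ℝ) (Set.Ioi ε) y‖
      ≤ ((Nat.factorial N : ℕ) : ℝ) * (max 1 ε⁻¹)^(N+1) := by
  rw [iteratedFDerivWithin_of_isOpen i isOpen_Ioi hy,
    norm_iteratedFDeriv_eq_norm_iteratedDeriv, iteratedDeriv_eq_iterate, iter_deriv_inv]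
  have hy0 : 0 < y := hε.trans hy
  rw [norm_mul]
  have h1 : ‖∏ l ∈ Finset.range i, (-1 - (l:ℝ))‖ = ((Nat.factorial i : ℕ) : ℝ) := by
    rw [norm_prod]
    have : ∀ l ∈ Finset.range i, ‖(-1 - (l:ℝ))‖ = ((l+1 : ℕ) : ℝ) := by
      intro l _
      rw [Real.norm_eq_abs, abs_of_nonpos (by push_cast; linarith [Nat.cast_nonneg (α := ℝ) l])]
      push_cast; ring
    rw [Finset.prod_congr rfl this, ← Nat.cast_prod, Finset.prod_range_add_one_eq_factorial]
  have h2 : ‖y ^ (-1 - (i:ℤ))‖ ≤ (max 1 ε⁻¹)^(N+1) := by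
    have hexp : (-1 - (i:ℤ)) = -((i+1 : ℕ) : ℤ) := by push_cast; ring
    rw [hexp, zpow_neg, zpow_natCast, Real.norm_eq_abs,
      _root_.abs_of_nonneg (by positivity)]
    have hstep : (y ^ (i+1))⁻¹ ≤ (ε ^ (i+1))⁻¹ := by
      refine inv_anti₀ (by positivity) ?_
      exact pow_le_pow_left₀ hε.le hy.le _
    refine hstep.trans ?_
    rw [← inv_pow]
    calc (ε⁻¹)^(i+1) ≤ (max 1 ε⁻¹)^(i+1) := pow_le_pow_left₀ (by positivity) (le_max_right _ _) _
      _ ≤ (max 1 ε⁻¹)^(N+1) := pow_le_pow_right₀ (le_max_left _ _) (by omega)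
  calc ‖(-1 : ℝ) ^ i * ((Nat.factorial i : ℕ) : ℝ)‖ * ‖y ^ (-1 - (i:ℤ))‖
      = ((Nat.factorial i : ℕ) : ℝ) * ‖y ^ (-1 - (i:ℤ))‖ := by simp
    _ ≤ ((Nat.factorial N : ℕ) : ℝ) * (max 1 ε⁻¹)^(N+1) := by
        refine mul_le_mul ?_ h2 (norm_nonneg _) (by positivity)
        exact_mod_cast Nat.factorial_le hi

lemma temperate_inv {q : E₁ → ℝ} (hq : Function.HasTemperateGrowth q)
    {δ : ℝ} (hδ : 0 < δ) (hlb : ∀ x, δ ≤ q x) :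
    Function.HasTemperateGrowth (fun x => (q x)⁻¹) := by
  have hne : ∀ x, q x ≠ 0 := fun x => (hδ.trans_le (hlb x)).ne'
  refine ⟨hq.1.inv hne, fun N => ?_⟩
  obtain ⟨k, Cq, hCq0, hq2⟩ := hq.norm_iteratedFDeriv_le_uniform N
  set ε := δ/2 with hε
  have hε0 : 0 < ε := by positivity
  set Cg : ℝ := ((Nat.factorial N : ℕ) : ℝ) * (max 1 ε⁻¹)^(N+1) with hCg
  have hCg0 : 0 ≤ Cg := by positivity
  refine ⟨k * N, ((Nat.factorial N : ℕ) : ℝ) * Cg * (1 + Cq)^N, fun x => ?_⟩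
  set D : ℝ := max 1 (Cq * (1+‖x‖)^k) with hD
  have hD1 : (1:ℝ) ≤ D := le_max_left _ _
  have key : ‖iteratedFDeriv ℝ N ((Inv.inv : ℝ → ℝ) ∘ q) x‖
      ≤ ((Nat.factorial N : ℕ) : ℝ) * Cg * D^N := by
    rw [← iteratedFDerivWithin_univ]
    refine norm_iteratedFDerivWithin_comp_le (n := N) (N := (N : WithTop ℕ∞))
      (t := Set.Ioi ε) ((contDiffOn_inv ℝ).mono ?_) ((hq.1.of_le (mod_cast le_top)).contDiffOn)
      le_rfl isOpen_Ioi.uniqueDiffOn uniqueDiffOn_univ ?_ (Set.mem_univ x) ?_ ?_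
    · intro y hy
      simp only [Set.mem_compl_iff, Set.mem_singleton_iff]
      exact (hε0.trans hy).ne'
    · intro y _
      exact Set.mem_Ioi.2 (lt_of_lt_of_le (by linarith) (hlb y))
    · intro i hi
      exact inv_deriv_bound hε0 N i hi (Set.mem_Ioi.2 (lt_of_lt_of_le (by linarith) (hlb x)))
    · intro i hi1 hiN
      rw [iteratedFDerivWithin_univ]
      calc ‖iteratedFDeriv ℝ i q x‖ ≤ Cq * (1+‖x‖)^k := hq2 i hiN x
        _ ≤ D := le_max_right _ _
        _ ≤ D^i := le_self_pow₀ hD1 (by omega)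
  have hcomp : (Inv.inv : ℝ → ℝ) ∘ q = fun x => (q x)⁻¹ := rfl
  rw [hcomp] at key
  refine key.trans ?_
  have hDle : D ≤ (1 + Cq) * (1+‖x‖)^k := by
    rw [hD]
    have h1x : (1:ℝ) ≤ (1+‖x‖)^k := one_le_pow₀ (by linarith [norm_nonneg x])
    refine max_le ?_ ?_
    · calc (1:ℝ) ≤ (1+‖x‖)^k := h1x
        _ = 1 * (1+‖x‖)^k := (one_mul _).symm
        _ ≤ (1 + Cq) * (1+‖x‖)^k := by
            refine mul_le_mul_of_nonneg_right (by linarith) (by positivity)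
    · exact mul_le_mul_of_nonneg_right (by linarith) (by positivity)
  calc ((Nat.factorial N : ℕ) : ℝ) * Cg * D^N
      ≤ ((Nat.factorial N : ℕ) : ℝ) * Cg * ((1 + Cq) * (1+‖x‖)^k)^N := by
        refine mul_le_mul_of_nonneg_left (pow_le_pow_left₀ ?_ hDle N) (by positivity)
        linarith
    _ = ((Nat.factorial N : ℕ) : ℝ) * Cg * (1 + Cq)^N * (1+‖x‖)^(k*N) := by
        rw [mul_pow, pow_mul]; ring

end Aux

section FourierAux

open Real Complex SchwartzMap Metric
open scoped ContDiff

variable {n : ℕ}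

local notation "E" => EuclideanSpace ℝ (Fin n)

lemma B0 {w : E → ℂ} (hw : Integrable w) (hw' : Integrable (fun v => ‖v‖ * ‖w v‖))
    (j : Fin n) (x : E) :
    fderiv ℝ (FourierTransform.fourier w) x (EuclideanSpace.single j 1)
      = FourierTransform.fourier (fun v => (-(2*π*Complex.I)*(v j)) * w v) x := by
  rw [Real.fderiv_fourier hw hw']
  have hint : Integrable (VectorFourier.fourierSMulRight (innerSL ℝ) w) := by
    refine ((hw'.const_mul (2*π)).mono'
      hw.aestronglyMeasurable.fourierSMulRight (Filter.Eventually.of_forall fun v => ?_))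
    have h1 : ‖VectorFourier.fourierSMulRight (innerSL ℝ) w v‖
        = 2 * π * ‖innerSL ℝ v‖ * ‖w v‖ := VectorFourier.norm_fourierSMulRight _ _ _
    have h2 : ‖innerSL ℝ v‖ ≤ ‖v‖ :=
      (innerSL ℝ v).opNorm_le_bound (norm_nonneg v)
        (fun y => by simpa using abs_real_inner_le_norm v y)
    rw [h1, mul_assoc]
    have := mul_le_mul_of_nonneg_right h2 (norm_nonneg (w v))
    exact mul_le_mul_of_nonneg_left this (by positivity)
  rw [Real.fourier_continuousLinearMap_apply hint]
  refine congrArg (fun F : E → ℂ => (FourierTransform.fourier F : E → ℂ) x) ?_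
  funext v
  rw [VectorFourier.fourierSMulRight_apply]
  have : (innerSL ℝ) v (EuclideanSpace.single j 1) = v j := by
    simp [EuclideanSpace.inner_single_right]
  rw [this, Complex.real_smul, smul_eq_mul]
  ring

lemma abs_coord_le (v : E) (j : Fin n) : |v j| ≤ ‖v‖ := by
  have h := abs_real_inner_le_norm v (EuclideanSpace.single j (1:ℝ))
  simpa [EuclideanSpace.inner_single_right, EuclideanSpace.norm_single] using h

lemma norm_factor (t : ℝ) (z : ℂ) : ‖-(2*π*Complex.I) * (t:ℂ) * z‖ = 2*π*|t| * ‖z‖ := by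
  rw [norm_mul, norm_mul, norm_neg, norm_mul, norm_mul, Complex.norm_I]
  simp [Complex.norm_real, _root_.abs_of_nonneg pi_pos.le]

lemma coord_cont (j : Fin n) : Continuous (fun v : E => ((v j : ℝ) : ℂ)) :=
  Complex.continuous_ofReal.comp (EuclideanSpace.proj (𝕜 := ℝ) j).continuous

lemma w1_integrable (f : 𝓢(E, ℂ)) (j : Fin n) :
    Integrable (fun v : E => (-(2*π*Complex.I)*(v j)) * f v) := by
  refine (((f.integrable_pow_mul volume 1).const_mul (2*π)).mono'
    ((Continuous.mul (continuous_const.mul (coord_cont j)) f.continuous).aestronglyMeasurable)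
    (Filter.Eventually.of_forall fun v => ?_))
  rw [norm_factor, pow_one]
  calc 2*π*|v j| * ‖f v‖ = 2*π*(|v j| * ‖f v‖) := by ring
    _ ≤ 2*π*(‖v‖*‖f v‖) := mul_le_mul_of_nonneg_left
        (mul_le_mul_of_nonneg_right (abs_coord_le v j) (norm_nonneg _)) (by positivity)

lemma w1_norm_mul_integrable (f : 𝓢(E, ℂ)) (j : Fin n) :
    Integrable (fun v : E => ‖v‖ * ‖(-(2*π*Complex.I)*(v j)) * f v‖) := by
  refine (((f.integrable_pow_mul volume 2).const_mul (2*π)).mono'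
    ((continuous_norm.mul ((Continuous.mul (continuous_const.mul (coord_cont j))
      f.continuous).norm)).aestronglyMeasurable)
    (Filter.Eventually.of_forall fun v => ?_))
  rw [Real.norm_of_nonneg (by positivity), norm_factor]
  calc ‖v‖ * (2*π*|v j| * ‖f v‖) = 2*π*((‖v‖*|v j|) * ‖f v‖) := by ring
    _ ≤ 2*π*((‖v‖*‖v‖)*‖f v‖) := by
        refine mul_le_mul_of_nonneg_left (mul_le_mul_of_nonneg_right ?_ (norm_nonneg _))
          (by positivity)
        exact mul_le_mul_of_nonneg_left (abs_coord_le v j) (norm_nonneg v)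
    _ = 2*π*(‖v‖^2*‖f v‖) := by ring

lemma w2_integrable (f : 𝓢(E, ℂ)) (j : Fin n) :
    Integrable (fun v : E =>
      (-(2*π*Complex.I)*(v j)) * ((-(2*π*Complex.I)*(v j)) * f v)) := by
  refine (((f.integrable_pow_mul volume 2).const_mul (4*π^2)).mono'
    ((Continuous.mul (continuous_const.mul (coord_cont j))
      (Continuous.mul (continuous_const.mul (coord_cont j)) f.continuous)).aestronglyMeasurable)
    (Filter.Eventually.of_forall fun v => ?_))
  rw [norm_factor, norm_factor]
  have h4 : |v j| * |v j| ≤ ‖v‖ * ‖v‖ :=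
    mul_le_mul (abs_coord_le v j) (abs_coord_le v j) (abs_nonneg _) (norm_nonneg _)
  calc 2*π*|v j| *(2*π*|v j| * ‖f v‖) = 4*π^2*((|v j| * |v j|)*‖f v‖) := by ring
    _ ≤ 4*π^2*((‖v‖*‖v‖)*‖f v‖) := mul_le_mul_of_nonneg_left
        (mul_le_mul_of_nonneg_right h4 (norm_nonneg _)) (by positivity)
    _ = 4*π^2*(‖v‖^2*‖f v‖) := by ring

lemma sum_pderiv (f : 𝓢(E, ℂ)) (x : E) :
    ∑ j : Fin n, pderivI n j (pderivI n j ⇑(fourierTransformCLM ℂ f)) x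
      = FourierTransform.fourier (fun v : E => (-(4*π^2*(‖v‖^2 : ℝ)) : ℂ) * f v) x := by
  have hcoe : ⇑(fourierTransformCLM ℂ f) = FourierTransform.fourier ⇑f := rfl
  have hint1 : Integrable (fun v : E => ‖v‖ * ‖f v‖) := by
    simpa using f.integrable_pow_mul volume 1
  have hstep1 : ∀ j : Fin n, pderivI n j ⇑(fourierTransformCLM ℂ f)
      = fun y => FourierTransform.fourier (fun v : E => (-(2*π*Complex.I)*(v j)) * f v) y := by
    intro j
    funext y
    rw [pderivI, hcoe]
    exact B0 f.integrable hint1 j y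
  have hstep2 : ∀ j : Fin n, ∀ y : E, pderivI n j (pderivI n j ⇑(fourierTransformCLM ℂ f)) y
      = FourierTransform.fourier
          (fun v : E => (-(2*π*Complex.I)*(v j)) * ((-(2*π*Complex.I)*(v j)) * f v)) y := by
    intro j y
    rw [pderivI, hstep1 j]
    exact B0 (w1_integrable f j) (w1_norm_mul_integrable f j) j y
  simp_rw [hstep2]
  rw [Real.fourier_eq]
  simp_rw [Real.fourier_eq]
  rw [← integral_finset_sum]
  · congr 1
    funext v
    rw [← Finset.smul_sum]
    congr 1
    have hnorm : (‖v‖:ℝ)^2 = ∑ j : Fin n, (v j)^2 := by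
      rw [EuclideanSpace.norm_eq, Real.sq_sqrt (by positivity)]
      exact Finset.sum_congr rfl fun j _ => by simp [Real.norm_eq_abs, sq_abs]
    have h1 : ∑ j : Fin n, (-(2*π*Complex.I)*(v j)) * ((-(2*π*Complex.I)*(v j)) * f v)
        = (∑ j : Fin n, ((2*π*Complex.I)^2 * ((v j):ℂ)^2)) * f v := by
      rw [Finset.sum_mul]
      exact Finset.sum_congr rfl fun j _ => by ring
    rw [h1]
    congr 1
    rw [← Finset.mul_sum]
    have h2 : (∑ j : Fin n, ((v j : ℂ))^2) = ((‖v‖^2 : ℝ) : ℂ) := by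
      rw [hnorm]
      push_cast
      rfl
    rw [h2]
    have hI : (2*π*Complex.I)^2 = ((-1 : ℝ) : ℂ) * (4*π^2 : ℝ) := by
      push_cast
      rw [mul_pow, mul_pow, Complex.I_sq]
      ring
    rw [hI]
    push_cast
    ring
  · intro j _
    exact (Real.fourierIntegral_convergent_iff x).2 (w2_integrable f j)

end FourierAux

/-- If `h` is a continuous function of polynomial growth which is harmonic in the sense of
tempered distributions, then the Fourier transform of the tempered distribution defined by `h`
is supported at the origin. -/
theorem stmt8 (n : ℕ) (h : EuclideanSpace ℝ (Fin n) → ℂ)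
    (hcont : Continuous h) (C : ℝ) (hC : 0 ≤ C) (m : ℕ)
    (hgrowth : ∀ x : EuclideanSpace ℝ (Fin n), ‖h x‖ ≤ C * (1 + ‖x‖ ^ m))
    (hharm : ∀ φ : SchwartzMap (EuclideanSpace ℝ (Fin n)) ℂ,
      ∫ x : EuclideanSpace ℝ (Fin n),
        h x * ∑ j : Fin n, pderivI n j (pderivI n j (⇑φ)) x = 0) :
    ∀ φ : SchwartzMap (EuclideanSpace ℝ (Fin n)) ℂ,
      (∃ U : Set (EuclideanSpace ℝ (Fin n)), IsOpen U ∧ (0 : EuclideanSpace ℝ (Fin n)) ∈ U ∧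
        ∀ x ∈ U, φ x = 0) →
      ∫ x : EuclideanSpace ℝ (Fin n), FourierTransform.fourier (⇑φ : EuclideanSpace ℝ (Fin n) → ℂ) x * h x = 0 := by
  classical
  intro φ hφ
  obtain ⟨U, hUopen, hU0, hUzero⟩ := hφ
  obtain ⟨r, hr, hball⟩ := Metric.isOpen_iff.1 hUopen 0 hU0
  -- the bump function
  set β : ContDiffBump (0 : (EuclideanSpace ℝ (Fin n))) := ⟨r/2, 2*r/3, by positivity, by linarith⟩ with hβ
  have hβtemp : Function.HasTemperateGrowth (⇑β : (EuclideanSpace ℝ (Fin n)) → ℝ) :=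
    temperate_of_compact_support β.contDiff β.hasCompactSupport
  -- the function q = ⟪x,x⟫ + β x
  set q : (EuclideanSpace ℝ (Fin n)) → ℝ := fun x => (innerSL ℝ) x x + β x with hq
  have hqval : ∀ x : (EuclideanSpace ℝ (Fin n)), q x = ‖x‖^2 + β x := by
    intro x
    simp only [hq, innerSL_apply_apply, real_inner_self_eq_norm_sq]
  have hqtemp : Function.HasTemperateGrowth q :=
    temperate_add (temperate_bilin (innerSL ℝ)
      (ContinuousLinearMap.id ℝ (EuclideanSpace ℝ (Fin n))).hasTemperateGrowth
      (ContinuousLinearMap.id ℝ (EuclideanSpace ℝ (Fin n))).hasTemperateGrowth) hβtemp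
  -- Q = 4π² q
  set Q : (EuclideanSpace ℝ (Fin n)) → ℝ := fun x => (ContinuousLinearMap.mul ℝ ℝ) (4*Real.pi^2) (q x) with hQ
  have hQval : ∀ x : (EuclideanSpace ℝ (Fin n)), Q x = 4*Real.pi^2 * q x := fun x => rfl
  have hQtemp : Function.HasTemperateGrowth Q :=
    temperate_bilin (ContinuousLinearMap.mul ℝ ℝ)
      (Function.HasTemperateGrowth.const _) hqtemp
  set δ : ℝ := min 1 ((r/2)^2) with hδ
  have hδ0 : 0 < δ := lt_min one_pos (by positivity)
  have hqlb : ∀ x : (EuclideanSpace ℝ (Fin n)), δ ≤ q x := by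
    intro x
    rw [hqval]
    rcases le_or_gt ‖x‖ (r/2) with hx | hx
    · have h1 : β x = 1 := β.one_of_mem_closedBall (by
        simpa [Metric.mem_closedBall, dist_zero_right] using hx)
      rw [h1]
      have := sq_nonneg ‖x‖
      calc δ ≤ 1 := min_le_left _ _
        _ ≤ ‖x‖^2 + 1 := by nlinarith
    · have h0 : 0 ≤ β x := β.nonneg
      calc δ ≤ (r/2)^2 := min_le_right _ _
        _ ≤ ‖x‖^2 := by nlinarith
        _ ≤ ‖x‖^2 + β x := by linarith
  have hQlb : ∀ x : (EuclideanSpace ℝ (Fin n)), (4*Real.pi^2) * δ ≤ Q x := by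
    intro x
    rw [hQval]
    exact mul_le_mul_of_nonneg_left (hqlb x) (by positivity)
  have hQinvtemp : Function.HasTemperateGrowth (fun x : (EuclideanSpace ℝ (Fin n)) => (Q x)⁻¹) :=
    temperate_inv hQtemp (by positivity) hQlb
  -- the multiplier m
  set mre : (EuclideanSpace ℝ (Fin n)) → ℝ := fun x =>
    (ContinuousLinearMap.mul ℝ ℝ) (β x + (-1)) ((Q x)⁻¹) with hmre
  have hmreval : ∀ x : (EuclideanSpace ℝ (Fin n)), mre x = (β x - 1) * (Q x)⁻¹ := by
    intro x
    simp only [hmre, ContinuousLinearMap.mul_apply']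
    ring
  have hmretemp : Function.HasTemperateGrowth mre :=
    temperate_bilin (ContinuousLinearMap.mul ℝ ℝ)
      (temperate_add hβtemp (Function.HasTemperateGrowth.const _)) hQinvtemp
  set mc : (EuclideanSpace ℝ (Fin n)) → ℂ := fun x => ((mre x : ℝ) : ℂ) with hmc
  have hmctemp : Function.HasTemperateGrowth mc := temperate_ofReal hmretemp
  -- the Schwartz function g = φ * m
  set g : SchwartzMap (EuclideanSpace ℝ (Fin n)) ℂ :=
    SchwartzMap.bilinLeftCLM (ContinuousLinearMap.mul ℝ ℂ) hmctemp φ with hg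
  have hgval : ∀ x : (EuclideanSpace ℝ (Fin n)), g x = φ x * mc x := fun x => rfl
  -- the key pointwise identity
  have key : (fun v : (EuclideanSpace ℝ (Fin n)) => (-(4*Real.pi^2*(‖v‖^2 : ℝ)) : ℂ) * g v) = ⇑φ := by
    funext v
    rw [hgval]
    by_cases hv : φ v = 0
    · rw [hv]; ring
    · have hvU : v ∉ U := fun hmem => hv (hUzero v hmem)
      have hvr : r ≤ ‖v‖ := by
        by_contra hlt
        push_neg at hlt
        exact hvU (hball (by simpa [Metric.mem_ball, dist_zero_right] using hlt))
      have hβ0 : β v = 0 := β.zero_of_le_dist (by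
        rw [dist_zero_right]
        calc (2*r/3 : ℝ) ≤ r := by linarith
          _ ≤ ‖v‖ := hvr)
      have hv0 : (0:ℝ) < ‖v‖ := lt_of_lt_of_le hr hvr
      have hqv : q v = ‖v‖^2 := by rw [hqval, hβ0, add_zero]
      have hQv : Q v = 4*Real.pi^2 * ‖v‖^2 := by rw [hQval, hqv]
      have hmrev : mre v = -(4*Real.pi^2 * ‖v‖^2)⁻¹ := by
        rw [hmreval, hβ0, hQv]; ring
      have hA : (4*Real.pi^2 * ‖v‖^2 : ℝ) ≠ 0 := by positivity
      have hre : (-(4*Real.pi^2*(‖v‖^2 : ℝ))) * mre v = 1 := by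
        rw [hmrev]
        field_simp
      calc (-(4*Real.pi^2*(‖v‖^2 : ℝ)) : ℂ) * (φ v * mc v)
          = (((-(4*Real.pi^2*(‖v‖^2 : ℝ))) * mre v : ℝ) : ℂ) * φ v := by
            rw [hmc]
            push_cast
            ring
        _ = φ v := by rw [hre]; push_cast; ring
  -- apply harmonicity to the Fourier transform of g
  set ψ : SchwartzMap (EuclideanSpace ℝ (Fin n)) ℂ := SchwartzMap.fourierTransformCLM ℂ g with hψ
  have hsum : ∀ x : (EuclideanSpace ℝ (Fin n)),
      ∑ j : Fin n, pderivI n j (pderivI n j (⇑ψ)) x = FourierTransform.fourier (⇑φ) x := by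
    intro x
    rw [hψ, sum_pderiv g x, ← key]
  have hmain := hharm ψ
  have hfun : (fun x : (EuclideanSpace ℝ (Fin n)) => FourierTransform.fourier (⇑φ) x * h x)
      = fun x : (EuclideanSpace ℝ (Fin n)) => h x * ∑ j : Fin n, pderivI n j (pderivI n j (⇑ψ)) x := by
    funext x
    rw [hsum x, mul_comm]
  rw [hfun]
  exact hmain
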